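/- Consider the IBCD update: for each i = 1,…,n, xᵢᵗ⁺¹ = xᵗ − γ(∇fᵢ(xᵗ))_{Uᵢ} with U₁,…,Uₙ independent uniform size-τm block subsets, and xᵗ⁺¹ = (1/n)∑ᵢxᵢᵗ⁺¹. If each fᵢ is convex and L-smooth, f = (1/n)∑ᵢfᵢ is μ-strongly convex, ∇fᵢ(x*) = 0 for all i where x* minimizes f, and γ = n/((τn + 2(1−τ))·2L), then E‖xᵗ⁺¹ − x*‖² ≤ (1 − (μ/(2L))·τn/(τn + 2(1−τ)))‖xᵗ − x*‖². -/

import Mathlib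

open Finset
open scoped RealInnerProductSpace

/-- `x_U`: keep the coordinates of `x` lying in blocks of `U`, zero the rest. -/
noncomputable def restr {d m : ℕ} (b : Fin d → Fin m) (U : Finset (Fin m))
    (x : EuclideanSpace ℝ (Fin d)) : EuclideanSpace ℝ (Fin d) :=
  (WithLp.equiv 2 (Fin d → ℝ)).symm (fun j => if b j ∈ U then x j else 0)

lemma restr_apply {d m : ℕ} (b : Fin d → Fin m) (U : Finset (Fin m))
    (x : EuclideanSpace ℝ (Fin d)) (j : Fin d) :
    restr b U x j = if b j ∈ U then x j else 0 := rfl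

lemma card_filter_mem_powersetCard {α : Type*} [DecidableEq α] (s : Finset α) (a : α)
    (ha : a ∈ s) (k : ℕ) (hk : 0 < k) :
    ((powersetCard k s).filter (fun u => a ∈ u)).card = (s.card - 1).choose (k - 1) := by
  rw [← card_erase_of_mem ha, ← Finset.card_powersetCard]
  apply Finset.card_bij (fun u _ => u.erase a)
  · intro u hu
    simp only [mem_filter, mem_powersetCard] at hu
    simp only [mem_powersetCard]
    exact ⟨erase_subset_erase a hu.1.1, by rw [card_erase_of_mem hu.2, hu.1.2]⟩
  · intro u hu v hv h
    simp only [mem_filter] at hu hv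
    rw [← insert_erase hu.2, ← insert_erase hv.2, h]
  · intro v hv
    simp only [mem_powersetCard] at hv
    have hav : a ∉ v := fun h => (mem_erase.1 (hv.1 h)).1 rfl
    refine ⟨insert a v, ?_, by simp [hav]⟩
    simp only [mem_filter, mem_powersetCard]
    refine ⟨⟨insert_subset ha (hv.1.trans (erase_subset a s)), ?_⟩, mem_insert_self a v⟩
    rw [card_insert_of_notMem hav, hv.2]
    omega

lemma marg1 {n : ℕ} {κ : Type*} (P : Finset κ) (i : Fin n) (φ : κ → ℝ) :
    ∑ U ∈ Fintype.piFinset (fun _ : Fin n => P), φ (U i)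
      = (P.card : ℝ) ^ (n - 1) * ∑ u ∈ P, φ u := by
  calc ∑ U ∈ Fintype.piFinset (fun _ : Fin n => P), φ (U i)
      = ∑ U ∈ Fintype.piFinset (fun _ : Fin n => P),
          ∏ j, (if j = i then φ (U j) else 1) := by
        refine Finset.sum_congr rfl fun U _ => ?_
        rw [Finset.prod_eq_single i (fun j _ hj => if_neg hj) (by simp)]
        simp
    _ = ∏ j, ∑ u ∈ P, (if j = i then φ u else 1) :=
        (Finset.prod_univ_sum (fun _ : Fin n => P) (fun j u => if j = i then φ u else 1)).symm
    _ = (P.card : ℝ) ^ (n - 1) * ∑ u ∈ P, φ u := by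
        rw [← Finset.mul_prod_erase univ _ (mem_univ i)]
        rw [Finset.prod_eq_pow_card (b := (P.card : ℝ))
          (fun j hj => by rw [Finset.sum_ite_of_false (fun _ _ => (mem_erase.1 hj).1)]; simp)]
        simp only [if_pos rfl, card_erase_of_mem (mem_univ i), Finset.card_univ,
          Fintype.card_fin]
        ring_nf
        simp [mul_comm]

lemma marg2 {n : ℕ} {κ : Type*} (P : Finset κ) (i i' : Fin n) (hii : i ≠ i') (φ ψ : κ → ℝ) :
    ∑ U ∈ Fintype.piFinset (fun _ : Fin n => P), φ (U i) * ψ (U i')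
      = (P.card : ℝ) ^ (n - 2) * ((∑ u ∈ P, φ u) * ∑ u ∈ P, ψ u) := by
  calc ∑ U ∈ Fintype.piFinset (fun _ : Fin n => P), φ (U i) * ψ (U i')
      = ∑ U ∈ Fintype.piFinset (fun _ : Fin n => P),
          ∏ j, (if j = i then φ (U j) else if j = i' then ψ (U j) else 1) := by
        refine Finset.sum_congr rfl fun U _ => ?_
        rw [← Finset.mul_prod_erase univ _ (mem_univ i), if_pos rfl,
          ← Finset.mul_prod_erase _ _ (mem_erase.2 ⟨Ne.symm hii, mem_univ i'⟩),
          if_neg (Ne.symm hii), if_pos rfl,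
          Finset.prod_eq_one (fun j hj => ?_), mul_one]
        simp only [mem_erase] at hj
        rw [if_neg hj.2.1, if_neg hj.1]
    _ = ∏ j, ∑ u ∈ P, (if j = i then φ u else if j = i' then ψ u else 1) :=
        (Finset.prod_univ_sum (fun _ : Fin n => P)
          (fun j u => if j = i then φ u else if j = i' then ψ u else 1)).symm
    _ = (P.card : ℝ) ^ (n - 2) * ((∑ u ∈ P, φ u) * ∑ u ∈ P, ψ u) := by
        rw [← Finset.mul_prod_erase univ _ (mem_univ i),
          ← Finset.mul_prod_erase _ _ (mem_erase.2 ⟨Ne.symm hii, mem_univ i'⟩)]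
        rw [Finset.prod_eq_pow_card (b := (P.card : ℝ)) (fun j hj => by
          simp only [mem_erase] at hj
          rw [Finset.sum_ite_of_false (fun _ _ => hj.2.1),
            Finset.sum_ite_of_false (fun _ _ => hj.1)]; simp)]
        simp only [if_neg (show ¬ i' = i from Ne.symm hii), if_pos rfl]
        rw [card_erase_of_mem (mem_erase.2 ⟨Ne.symm hii, mem_univ i'⟩),
          card_erase_of_mem (mem_univ i)]
        simp only [Finset.card_univ, Fintype.card_fin, if_true]
        rw [show n-1-1 = n-2 by omega]
        ring

set_option maxHeartbeats 4000000 in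
/-- One step of IBCD: `xᵢᵗ⁺¹ = xᵗ − γ(∇fᵢ(xᵗ))_{Uᵢ}` with independent uniform
size-`τm` block subsets `Uᵢ` (encoded by averaging over all tuples), and
`xᵗ⁺¹ = (1/n)∑ᵢxᵢᵗ⁺¹`. If each `fᵢ` is convex and `L`-smooth, `f = (1/n)∑ᵢfᵢ` is
`μ`-strongly convex, `∇fᵢ(x*) = 0` for all `i`, and
`γ = n/((τn + 2(1−τ))·2L)`, then
`E‖xᵗ⁺¹ − x*‖² ≤ (1 − (μ/(2L))·τn/(τn + 2(1−τ)))‖xᵗ − x*‖²`. -/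
theorem stmt14 {d m n : ℕ} (hn : 0 < n) (b : Fin d → Fin m)
    (k : ℕ) (hk : 0 < k) (hkm : k ≤ m)
    (L μ τ γ : ℝ) (hL : 0 < L) (hμ : 0 < μ) (hτ : τ = (k : ℝ) / m)
    (hγ : γ = (n : ℝ) / ((τ * n + 2 * (1 - τ)) * (2 * L)))
    (f : Fin n → EuclideanSpace ℝ (Fin d) → ℝ)
    (G : Fin n → EuclideanSpace ℝ (Fin d) → EuclideanSpace ℝ (Fin d))
    (hconv : ∀ i, ∀ x y : EuclideanSpace ℝ (Fin d),
      f i x ≥ f i y + ⟪G i y, x - y⟫)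
    (hsmooth : ∀ i, ∀ x y : EuclideanSpace ℝ (Fin d),
      f i x ≤ f i y + ⟪G i y, x - y⟫ + L / 2 * ‖x - y‖ ^ 2)
    (hsc : ∀ x y : EuclideanSpace ℝ (Fin d),
      (n : ℝ)⁻¹ * ∑ i, f i x
        ≥ (n : ℝ)⁻¹ * ∑ i, f i y + ⟪(n : ℝ)⁻¹ • ∑ i, G i y, x - y⟫
          + μ / 2 * ‖x - y‖ ^ 2)
    (xstar : EuclideanSpace ℝ (Fin d)) (hzero : ∀ i, G i xstar = 0)
    (xt : EuclideanSpace ℝ (Fin d)) :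
    ((m.choose k : ℝ))⁻¹ ^ n *
      ∑ U ∈ Fintype.piFinset
          (fun _ : Fin n => Finset.powersetCard k (Finset.univ : Finset (Fin m))),
        ‖(n : ℝ)⁻¹ • (∑ i, (xt - γ • restr b (U i) (G i xt))) - xstar‖ ^ 2
      ≤ (1 - μ / (2 * L) * (τ * n / (τ * n + 2 * (1 - τ)))) * ‖xt - xstar‖ ^ 2 := by
  classical
  have hm : 0 < m := lt_of_lt_of_le hk hkm
  have hn' : (0:ℝ) < n := by exact_mod_cast hn
  have hn1 : (1:ℝ) ≤ n := by exact_mod_cast hn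
  have hτpos : 0 < τ := by rw [hτ]; positivity
  have hτ1 : τ ≤ 1 := by
    rw [hτ, div_le_one (by exact_mod_cast hm)]; exact_mod_cast hkm
  have hτn0 : τ * 1 ≤ τ * n := mul_le_mul_of_nonneg_left hn1 hτpos.le
  have hβ : 0 < τ * n + 2 * (1 - τ) := by linarith only [hτn0, hτpos, hτ1]
  have hγpos : 0 < γ := by rw [hγ]; positivity
  set P : Finset (Finset (Fin m)) := Finset.powersetCard k (Finset.univ : Finset (Fin m))
    with hPdef
  set N : ℝ := (m.choose k : ℝ) with hNdef
  have hPcard : (P.card : ℝ) = N := by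
    rw [hPdef, Finset.card_powersetCard, card_univ, Fintype.card_fin]
  have hN0 : (0:ℝ) < N := by rw [hNdef]; exact_mod_cast Nat.choose_pos hkm
  set C' : ℝ := (((m-1).choose (k-1) : ℕ) : ℝ) with hC'def
  have hCN : C' = τ * N := by
    have hnat : m * (m-1).choose (k-1) = m.choose k * k := by
      have h := Nat.add_one_mul_choose_eq (m-1) (k-1)
      rwa [show m-1+1 = m by omega, show k-1+1 = k by omega] at h
    have hcast : (m:ℝ) * C' = N * k := by rw [hC'def, hNdef]; exact_mod_cast hnat
    rw [hτ]
    field_simp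
    linarith [hcast]
  set a : EuclideanSpace ℝ (Fin d) := xt - xstar with ha
  set v : EuclideanSpace ℝ (Fin d) := ∑ i, G i xt with hv
  set S : ℝ := ∑ i, ‖G i xt‖^2 with hSdef
  set T : ℝ := ∑ i, ∑ i' ∈ univ.erase i, ⟪G i xt, G i' xt⟫ with hTdef
  have hcoord : ∀ (c : Fin m) (r : ℝ), ∑ u ∈ P, (if c ∈ u then r else 0) = C' * r := by
    intro c r
    have e : ∀ u : Finset (Fin m), (if c ∈ u then r else 0)
        = (if c ∈ u then (1:ℝ) else 0) * r := by intro u; by_cases h : c ∈ u <;> simp [h]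
    simp only [e]
    rw [← Finset.sum_mul, Finset.sum_boole]
    congr 1
    rw [hC'def, hPdef]
    norm_cast
    rw [card_filter_mem_powersetCard univ c (mem_univ c) k hk, card_univ, Fintype.card_fin]
  have hcoord1 : ∀ c : Fin m, ∑ u ∈ P, (if c ∈ u then (1:ℝ) else 0) = C' := by
    intro c; rw [hcoord c 1, mul_one]
  have hvec : ∀ y : EuclideanSpace ℝ (Fin d), ∑ u ∈ P, restr b u y = C' • y := by
    intro y
    ext j
    rw [PiLp.smul_apply]
    rw [show (∑ u ∈ P, restr b u y) j = ∑ u ∈ P, restr b u y j from by rw [WithLp.ofLp_sum, Finset.sum_apply]]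
    simp only [restr_apply, hcoord, smul_eq_mul]
  have hdiag : ∀ (u : Finset (Fin m)) (x y : EuclideanSpace ℝ (Fin d)),
      ⟪restr b u x, restr b u y⟫ = ⟪x, restr b u y⟫ := by
    intro u x y
    simp only [PiLp.inner_apply, RCLike.inner_apply, conj_trivial, restr_apply]
    refine Finset.sum_congr rfl fun j _ => ?_
    by_cases h : b j ∈ u <;> simp [h]
  have hrr : ∀ (u u' : Finset (Fin m)) (x y : EuclideanSpace ℝ (Fin d)),
      ⟪restr b u x, restr b u' y⟫
        = ∑ j, ((if b j ∈ u then (1:ℝ) else 0) * x j)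
            * ((if b j ∈ u' then (1:ℝ) else 0) * y j) := by
    intro u u' x y
    simp only [PiLp.inner_apply, RCLike.inner_apply, conj_trivial, restr_apply]
    refine Finset.sum_congr rfl fun j _ => ?_
    by_cases h : b j ∈ u <;> by_cases h' : b j ∈ u' <;> simp [h, h', mul_comm]
  have hoff : ∀ (i i' : Fin n), i ≠ i' → ∀ x y : EuclideanSpace ℝ (Fin d),
      ∑ U ∈ Fintype.piFinset (fun _ : Fin n => P), ⟪restr b (U i) x, restr b (U i') y⟫
        = N ^ (n-2) * (C'^2 * ⟪x, y⟫) := by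
    intro i i' hii x y
    simp only [hrr]
    rw [Finset.sum_comm]
    have e : ∀ j : Fin d,
        ∑ U ∈ Fintype.piFinset (fun _ : Fin n => P),
          ((if b j ∈ U i then (1:ℝ) else 0) * x j) * ((if b j ∈ U i' then (1:ℝ) else 0) * y j)
        = N ^ (n-2) * ((C' * x j) * (C' * y j)) := by
      intro j
      rw [marg2 P i i' hii (fun u => (if b j ∈ u then (1:ℝ) else 0) * x j)
        (fun u => (if b j ∈ u then (1:ℝ) else 0) * y j), hPcard]
      congr 2
      · rw [← Finset.sum_mul, hcoord1 (b j)]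
      · rw [← Finset.sum_mul, hcoord1 (b j)]
    simp only [e]
    rw [PiLp.inner_apply]
    simp only [RCLike.inner_apply, conj_trivial, Finset.mul_sum]
    exact Finset.sum_congr rfl fun j _ => by ring
  set w : (Fin n → Finset (Fin m)) → EuclideanSpace ℝ (Fin d) :=
    fun U => ∑ i, restr b (U i) (G i xt) with hwdef
  have h_term : ∀ U : Fin n → Finset (Fin m),
      ‖(n : ℝ)⁻¹ • (∑ i, (xt - γ • restr b (U i) (G i xt))) - xstar‖ ^ 2
      = ‖a‖^2 - 2*(γ*(n:ℝ)⁻¹)*⟪a, w U⟫ + (γ*(n:ℝ)⁻¹)^2 * ‖w U‖^2 := by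
    intro U
    have h1 : ∑ i : Fin n, (xt - γ • restr b (U i) (G i xt)) = (n:ℝ) • xt - γ • w U := by
      rw [Finset.sum_sub_distrib, Finset.sum_const, card_univ, Fintype.card_fin, hwdef,
        Finset.smul_sum]
      congr 1
      exact (Nat.cast_smul_eq_nsmul ℝ n xt).symm
    have h2 : (n : ℝ)⁻¹ • ((n:ℝ) • xt - γ • w U) - xstar = a - (γ * (n:ℝ)⁻¹) • w U := by
      rw [smul_sub, smul_smul, smul_smul, inv_mul_cancel₀ (ne_of_gt hn'), one_smul, ha,
        mul_comm γ ((n:ℝ)⁻¹)]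
      abel
    rw [h1, h2, norm_sub_sq_real, real_inner_smul_right, norm_smul]
    simp only [Real.norm_eq_abs, mul_pow, sq_abs]
    ring
  have hsum1 : ∑ U ∈ Fintype.piFinset (fun _ : Fin n => P), ⟪a, w U⟫
      = N^(n-1) * (C' * ⟪a, v⟫) := by
    have e : ∀ U : Fin n → Finset (Fin m),
        ⟪a, w U⟫ = ∑ i, ⟪a, restr b (U i) (G i xt)⟫ := by
      intro U; rw [hwdef]; exact inner_sum _ _ _
    simp only [e]
    rw [Finset.sum_comm]
    have e2 : ∀ i : Fin n,
        ∑ U ∈ Fintype.piFinset (fun _ : Fin n => P), ⟪a, restr b (U i) (G i xt)⟫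
        = N^(n-1) * (C' * ⟪a, G i xt⟫) := by
      intro i
      rw [marg1 P i (fun u => ⟪a, restr b u (G i xt)⟫), hPcard]
      congr 1
      rw [← inner_sum, hvec, real_inner_smul_right]
    simp only [e2]
    rw [← Finset.mul_sum, ← Finset.mul_sum, hv, inner_sum]
  have hsum2 : ∑ U ∈ Fintype.piFinset (fun _ : Fin n => P), ‖w U‖^2
      = N^(n-1) * (C' * S) + N^(n-2) * (C'^2 * T) := by
    have e : ∀ U : Fin n → Finset (Fin m),
        ‖w U‖^2 = ∑ i, ∑ i', ⟪restr b (U i) (G i xt), restr b (U i') (G i' xt)⟫ := by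
      intro U
      rw [← real_inner_self_eq_norm_sq, hwdef, sum_inner]
      exact Finset.sum_congr rfl fun i _ => inner_sum _ _ _
    simp only [e]
    rw [Finset.sum_comm]
    have e2 : ∀ i : Fin n,
        ∑ U ∈ Fintype.piFinset (fun _ : Fin n => P),
          ∑ i', ⟪restr b (U i) (G i xt), restr b (U i') (G i' xt)⟫
        = N^(n-1) * (C' * ‖G i xt‖^2)
          + N^(n-2) * (C'^2 * ∑ i' ∈ univ.erase i, ⟪G i xt, G i' xt⟫) := by
      intro i
      rw [Finset.sum_comm]
      rw [← Finset.sum_erase_add _ _ (mem_univ i)]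
      have ediag : ∑ U ∈ Fintype.piFinset (fun _ : Fin n => P),
          ⟪restr b (U i) (G i xt), restr b (U i) (G i xt)⟫
          = N^(n-1) * (C' * ‖G i xt‖^2) := by
        simp only [hdiag]
        rw [marg1 P i (fun u => ⟪G i xt, restr b u (G i xt)⟫), hPcard]
        congr 1
        rw [← inner_sum, hvec, real_inner_smul_right, real_inner_self_eq_norm_sq]
      have eoff : ∀ i' ∈ univ.erase i,
          ∑ U ∈ Fintype.piFinset (fun _ : Fin n => P),
            ⟪restr b (U i) (G i xt), restr b (U i') (G i' xt)⟫
          = N^(n-2) * (C'^2 * ⟪G i xt, G i' xt⟫) := by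
        intro i' hi'
        exact hoff i i' (Ne.symm (mem_erase.1 hi').1) _ _
      rw [ediag, Finset.sum_congr rfl eoff, ← Finset.mul_sum, ← Finset.mul_sum]
      ring
    simp only [e2]
    rw [Finset.sum_add_distrib, ← Finset.mul_sum, ← Finset.mul_sum, ← Finset.mul_sum,
      ← Finset.mul_sum, hSdef, hTdef]
  have hT : T = ‖v‖^2 - S := by
    have e : ‖v‖^2 = T + S := by
      rw [← real_inner_self_eq_norm_sq, hv, sum_inner]
      have e2 : ∀ i : Fin n, ⟪G i xt, v⟫ = ∑ i', ⟪G i xt, G i' xt⟫ := by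
        intro i; rw [hv]; exact inner_sum _ _ _
      simp only [e2, hTdef, hSdef]
      rw [← Finset.sum_add_distrib]
      refine Finset.sum_congr rfl fun i _ => ?_
      rw [← Finset.sum_erase_add _ _ (mem_univ i), inner_add_right, inner_sum, real_inner_self_eq_norm_sq]
    linarith only [e]
  have hmain : N⁻¹ ^ n *
      ∑ U ∈ Fintype.piFinset (fun _ : Fin n => P),
        ‖(n : ℝ)⁻¹ • (∑ i, (xt - γ • restr b (U i) (G i xt))) - xstar‖ ^ 2
      = ‖a‖^2 - 2*(γ*(n:ℝ)⁻¹*τ)*⟪a, v⟫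
        + (γ*(n:ℝ)⁻¹)^2 * (τ * S + τ^2 * T) := by
    have hsplit : ∑ U ∈ Fintype.piFinset (fun _ : Fin n => P),
        ‖(n : ℝ)⁻¹ • (∑ i, (xt - γ • restr b (U i) (G i xt))) - xstar‖ ^ 2
        = N^n * ‖a‖^2 - 2*(γ*(n:ℝ)⁻¹) * (N^(n-1) * (C' * ⟪a, v⟫))
          + (γ*(n:ℝ)⁻¹)^2 * (N^(n-1) * (C' * S) + N^(n-2) * (C'^2 * T)) := by
      rw [Finset.sum_congr rfl (fun U _ => h_term U), Finset.sum_add_distrib,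
        Finset.sum_sub_distrib, ← Finset.mul_sum, ← Finset.mul_sum, hsum1, hsum2,
        Finset.sum_const, Fintype.card_piFinset_const]
      congr 1
      · congr 1
        rw [nsmul_eq_mul, Nat.cast_pow, hPcard]
    rw [hsplit, hCN]
    have p1 : N⁻¹^n * N^n = 1 := by
      rw [inv_pow, inv_mul_cancel₀ (pow_ne_zero _ (ne_of_gt hN0))]
    have q2 : N⁻¹^n * (N^(n-1) * N) = 1 := by
      rw [← pow_succ, show n-1+1 = n by omega]; exact p1
    by_cases hn2 : 2 ≤ n
    · have q3 : N⁻¹^n * (N^(n-2) * N^2) = 1 := by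
        rw [← pow_add, show n-2+2 = n by omega]; exact p1
      linear_combination (‖a‖^2) * p1 + (-2*(γ*(n:ℝ)⁻¹)*τ*⟪a, v⟫
        + (γ*(n:ℝ)⁻¹)^2*τ*S) * q2 + ((γ*(n:ℝ)⁻¹)^2*τ^2*T) * q3
    · have hn1' : n = 1 := by omega
      have hT0 : T = 0 := by
        rw [hTdef]
        subst hn1'
        simp
      rw [hT0]
      linear_combination (‖a‖^2) * p1 + (-2*(γ*(n:ℝ)⁻¹)*τ*⟪a, v⟫
        + (γ*(n:ℝ)⁻¹)^2*τ*S) * q2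
  rw [hmain]
  -- analytic part
  have hg2 : ∀ i, ‖G i xt‖^2 ≤ 2*L*(f i xt - f i xstar) := by
    intro i
    have h1 := hconv i (xt - L⁻¹ • G i xt) xstar
    rw [hzero i, inner_zero_left] at h1
    have h2 := hsmooth i (xt - L⁻¹ • G i xt) xt
    have e1 : (xt - L⁻¹ • G i xt) - xt = -(L⁻¹ • G i xt) := by abel
    rw [e1, inner_neg_right, real_inner_smul_right, real_inner_self_eq_norm_sq, norm_neg,
      norm_smul, Real.norm_eq_abs, abs_of_pos (inv_pos.2 hL)] at h2
    have key : L/2 * (L⁻¹ * ‖G i xt‖)^2 = L⁻¹ * ‖G i xt‖^2 / 2 := by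
      field_simp
    have h3 : L⁻¹ * ‖G i xt‖^2 ≤ 2*(f i xt - f i xstar) := by linarith
    have h4 := mul_le_mul_of_nonneg_left h3 hL.le
    calc ‖G i xt‖^2 = L * (L⁻¹ * ‖G i xt‖^2) := by
          rw [← mul_assoc, mul_inv_cancel₀ (ne_of_gt hL), one_mul]
      _ ≤ L * (2*(f i xt - f i xstar)) := h4
      _ = 2*L*(f i xt - f i xstar) := by ring
  set D : ℝ := (n:ℝ)⁻¹ * ∑ i, (f i xt - f i xstar) with hDdef
  have hSD : (n:ℝ)⁻¹ * S ≤ 2*L*D := by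
    have h := Finset.sum_le_sum (fun i (_ : i ∈ (univ : Finset (Fin n))) => hg2 i)
    rw [← Finset.mul_sum] at h
    calc (n:ℝ)⁻¹ * S ≤ (n:ℝ)⁻¹ * (2*L*(∑ i, (f i xt - f i xstar))) := by
          apply mul_le_mul_of_nonneg_left _ (by positivity)
          rw [hSdef]; exact h
      _ = 2*L*D := by rw [hDdef]; ring
  have hv2 : ‖v‖^2 ≤ n * S := by
    have h1 : ‖v‖ ≤ ∑ i, ‖G i xt‖ := by rw [hv]; exact norm_sum_le _ _
    have h2 : ‖v‖^2 ≤ (∑ i, ‖G i xt‖)^2 := by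
      apply pow_le_pow_left₀ (norm_nonneg _) h1
    have h3 := sq_sum_le_card_mul_sum_sq (s := (univ : Finset (Fin n)))
      (f := fun i => ‖G i xt‖)
    rw [card_univ, Fintype.card_fin] at h3
    rw [hSdef]
    calc ‖v‖^2 ≤ _ := h2
      _ ≤ (n:ℝ) * ∑ i, ‖G i xt‖^2 := h3
  have hinner : (n:ℝ)⁻¹ * ⟪a, v⟫ ≥ D + μ/2 * ‖a‖^2 := by
    have h := hsc xstar xt
    rw [← hv, real_inner_smul_left] at h
    have e : ⟪v, xstar - xt⟫ = -⟪a, v⟫ := by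
      rw [show xstar - xt = -(xt - xstar) from by abel, inner_neg_right, ← ha,
        real_inner_comm]
    rw [e] at h
    have e2 : ‖xstar - xt‖ = ‖a‖ := by rw [ha, norm_sub_rev]
    rw [e2] at h
    have e3 : D = (n:ℝ)⁻¹ * ∑ i, f i xt - (n:ℝ)⁻¹ * ∑ i, f i xstar := by
      rw [hDdef, Finset.sum_sub_distrib]; ring
    rw [ge_iff_le, e3]
    linarith only [h]
  have hD0 : 0 ≤ D := by
    have h := hsc xt xstar
    have e0 : ∑ i, G i xstar = (0 : EuclideanSpace ℝ (Fin d)) := by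
      simp [hzero]
    rw [e0, smul_zero, inner_zero_left] at h
    have e3 : D = (n:ℝ)⁻¹ * ∑ i, f i xt - (n:ℝ)⁻¹ * ∑ i, f i xstar := by
      rw [hDdef, Finset.sum_sub_distrib]; ring
    have hpos : 0 ≤ μ / 2 * ‖xt - xstar‖^2 := by positivity
    linarith only [h, e3, hpos]
  have hstep4 : γ * L * (1 + τ*((n:ℝ)-1)) * (n:ℝ)⁻¹ ≤ 1 := by
    have e : γ * L * (1 + τ*((n:ℝ)-1)) * (n:ℝ)⁻¹
        = (1 + τ*((n:ℝ)-1)) / (2*(τ * n + 2 * (1 - τ))) := by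
      rw [hγ]; field_simp
    rw [e, div_le_one (by positivity)]
    linarith only [hτn0, hτpos, hτ1]
  have hcoef : 1 - γ*τ*μ = 1 - μ / (2 * L) * (τ * n / (τ * n + 2 * (1 - τ))) := by
    rw [hγ]; field_simp
  rw [← hcoef]
  -- final chain
  have hS0 : 0 ≤ S := by
    rw [hSdef]; exact Finset.sum_nonneg (fun i _ => by positivity)
  have hco : 0 ≤ 1 + τ*((n:ℝ)-1) := by linarith only [hτn0, hτpos]
  have c1 : τ^2*T ≤ τ^2*(((n:ℝ)-1)*S) := by
    apply mul_le_mul_of_nonneg_left _ (by positivity)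
    rw [hT]; linarith only [hv2]
  have step1 : (γ*(n:ℝ)⁻¹)^2*(τ*S + τ^2*T)
      ≤ γ^2*τ*(1+τ*((n:ℝ)-1))*((n:ℝ)⁻¹*(2*L*D)) := by
    have e : (γ*(n:ℝ)⁻¹)^2*(τ*S + τ^2*T)
        ≤ (γ*(n:ℝ)⁻¹)^2*(τ*(1+τ*((n:ℝ)-1))*S) := by
      apply mul_le_mul_of_nonneg_left _ (by positivity)
      linarith only [c1]
    refine e.trans ?_
    have e2 : (γ*(n:ℝ)⁻¹)^2*(τ*(1+τ*((n:ℝ)-1))*S)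
        = γ^2*τ*(1+τ*((n:ℝ)-1))*((n:ℝ)⁻¹*((n:ℝ)⁻¹*S)) := by ring
    rw [e2]
    apply mul_le_mul_of_nonneg_left _ (by positivity)
    apply mul_le_mul_of_nonneg_left hSD (by positivity)
  have step2 : γ^2*τ*(1+τ*((n:ℝ)-1))*((n:ℝ)⁻¹*(2*L*D)) ≤ 2*γ*τ*D := by
    have e : γ^2*τ*(1+τ*((n:ℝ)-1))*((n:ℝ)⁻¹*(2*L*D))
        = (2*γ*τ*D)*(γ*L*(1+τ*((n:ℝ)-1))*(n:ℝ)⁻¹) := by ring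
    rw [e]
    calc (2*γ*τ*D)*(γ*L*(1+τ*((n:ℝ)-1))*(n:ℝ)⁻¹) ≤ (2*γ*τ*D)*1 := by
          apply mul_le_mul_of_nonneg_left hstep4 (by positivity)
      _ = 2*γ*τ*D := by ring
  have step3 : 2*γ*τ*(D + μ/2 * ‖a‖^2) ≤ 2*γ*τ*((n:ℝ)⁻¹ * ⟪a, v⟫) := by
    apply mul_le_mul_of_nonneg_left hinner (by positivity)
  linarith only [step1.trans step2, step3]
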